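/- Let f_w be an l-layer GCN with nonzero weight matrices W_1,…,W_l, but with an arbitrary matrix P ∈ ℝ^{n×n} in place of the graph Laplacian, and input X ∈ ℝ^{n×h_0}. Let ΔW_1,…,ΔW_l be perturbation matrices of matching sizes with ‖ΔW_i‖₂ ≤ ‖W_i‖₂ / l for all i ∈ [l], and let H_k' denote the node representations of the perturbed network with weights W_i + ΔW_i. Then for every 1 ≤ j ≤ l−1: ‖H_j' − H_j‖_F ≤ ‖X‖_F · ‖P‖₂^j · (∏_{i=1}^j ‖W_i‖₂) · Σ_{k=1}^j (‖ΔW_k‖₂ / ‖W_k‖₂) · (1 + 1/l)^{j−k}. -/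

import Mathlib

open MeasureTheory Matrix Finset
open scoped Matrix.Norms.L2Operator

noncomputable section

/-- Spectral norm of a real matrix: the operator norm induced by Euclidean vector norms. -/
def specNorm {m n : Type*} [Fintype m] [Fintype n] [DecidableEq n] (A : Matrix m n ℝ) : ℝ :=
  ‖LinearMap.toContinuousLinearMap (Matrix.toEuclideanLin A)‖

/-- Frobenius norm of a real matrix. -/
def frobNorm {m n : Type*} [Fintype m] [Fintype n] (A : Matrix m n ℝ) : ℝ :=
  Real.sqrt (∑ i, ∑ j, (A i j) ^ 2)

/-- Euclidean norm of a finite real vector. -/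
def euclNorm {n : Type*} [Fintype n] (v : n → ℝ) : ℝ :=
  Real.sqrt (∑ i, (v i) ^ 2)

/-- Entrywise ReLU on a matrix. -/
def relu {m k : Type*} (M : Matrix m k ℝ) : Matrix m k ℝ := M.map (fun x => max x 0)

/-- Node representations of a GCN: `H_0 = X`, `H_{k+1} = σ(P H_k W_{k+1})`
(we index weights from `0`, so `W k` is the paper's `W_{k+1}`). -/
def gcnRep {n : ℕ} (d : ℕ → ℕ) (W : ∀ k : ℕ, Matrix (Fin (d k)) (Fin (d (k + 1))) ℝ)
    (P : Matrix (Fin n) (Fin n) ℝ) (X : Matrix (Fin n) (Fin (d 0)) ℝ) :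
    (k : ℕ) → Matrix (Fin n) (Fin (d k)) ℝ
  | 0 => X
  | (k + 1) => relu (P * gcnRep d W P X k * W k)

/-- Output (readout) of an `l`-layer GCN: `f_w(G) = H_l = (1/n) 1_n H_{l-1} W_l`. -/
def gcnOut {n : ℕ} (d : ℕ → ℕ) (W : ∀ k : ℕ, Matrix (Fin (d k)) (Fin (d (k + 1))) ℝ)
    (P : Matrix (Fin n) (Fin n) ℝ) (X : Matrix (Fin n) (Fin (d 0)) ℝ) :
    (l : ℕ) → Fin (d l) → ℝ
  | 0 => fun _ => 0
  | (l + 1) => fun j => (n : ℝ)⁻¹ * ∑ i, (gcnRep d W P X l * W l) i j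

section AuxLemmas

variable {m k p : Type*} [Fintype m] [Fintype k] [Fintype p]

lemma specNorm_eq_norm [DecidableEq k] (A : Matrix m k ℝ) : specNorm A = ‖A‖ := rfl

lemma specNorm_nonneg [DecidableEq k] (A : Matrix m k ℝ) : 0 ≤ specNorm A := norm_nonneg _

lemma specNorm_pos [DecidableEq k] (A : Matrix m k ℝ) (h : A ≠ 0) : 0 < specNorm A := by
  rw [specNorm_eq_norm]; exact norm_pos_iff.mpr h

lemma euclNorm_eq (v : k → ℝ) : euclNorm v = ‖(EuclideanSpace.equiv k ℝ).symm v‖ := by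
  rw [EuclideanSpace.norm_eq]
  simp [euclNorm, Real.norm_eq_abs, sq_abs]

lemma euclNorm_mulVec_le [DecidableEq k] (A : Matrix m k ℝ) (v : k → ℝ) :
    euclNorm (A *ᵥ v) ≤ specNorm A * euclNorm v := by
  rw [euclNorm_eq, euclNorm_eq, specNorm_eq_norm]
  exact A.l2_opNorm_mulVec ((EuclideanSpace.equiv k ℝ).symm v)

lemma frobNorm_nonneg (A : Matrix m k ℝ) : 0 ≤ frobNorm A := Real.sqrt_nonneg _

lemma frobNorm_eq (A : Matrix m k ℝ) :
    frobNorm A = ‖(EuclideanSpace.equiv (m × k) ℝ).symm (fun q => A q.1 q.2)‖ := by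
  rw [EuclideanSpace.norm_eq]
  simp [frobNorm, Real.norm_eq_abs, sq_abs, Fintype.sum_prod_type]

lemma frobNorm_add_le (A B : Matrix m k ℝ) : frobNorm (A + B) ≤ frobNorm A + frobNorm B := by
  rw [frobNorm_eq, frobNorm_eq, frobNorm_eq]
  exact norm_add_le ((EuclideanSpace.equiv (m × k) ℝ).symm (fun q => A q.1 q.2))
    ((EuclideanSpace.equiv (m × k) ℝ).symm (fun q => B q.1 q.2))

lemma frobNorm_sq (A : Matrix m k ℝ) : frobNorm A ^ 2 = ∑ i, ∑ j, (A i j) ^ 2 :=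
  Real.sq_sqrt (Finset.sum_nonneg fun _ _ => Finset.sum_nonneg fun _ _ => sq_nonneg _)

lemma frobNorm_mul_le_left [DecidableEq k] (A : Matrix m k ℝ) (B : Matrix k p ℝ) :
    frobNorm (A * B) ≤ specNorm A * frobNorm B := by
  have h0 : 0 ≤ specNorm A * frobNorm B := mul_nonneg (specNorm_nonneg A) (frobNorm_nonneg B)
  have key : frobNorm (A * B) ^ 2 ≤ (specNorm A * frobNorm B) ^ 2 := by
    have lhs : frobNorm (A * B) ^ 2 = ∑ j, ∑ i, ((A * B) i j) ^ 2 := by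
      rw [frobNorm_sq]; exact Finset.sum_comm
    have rhs : (specNorm A * frobNorm B) ^ 2 = ∑ j, specNorm A ^ 2 * ∑ i, (B i j) ^ 2 := by
      rw [mul_pow, frobNorm_sq, Finset.sum_comm, Finset.mul_sum]
    rw [lhs, rhs]
    refine Finset.sum_le_sum fun j _ => ?_
    have h1 : euclNorm (A *ᵥ fun i => B i j) ≤ specNorm A * euclNorm (fun i => B i j) :=
      euclNorm_mulVec_le A _
    have h2 : euclNorm (A *ᵥ fun i => B i j) ^ 2 ≤ (specNorm A * euclNorm (fun i => B i j)) ^ 2 :=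
      pow_le_pow_left₀ (Real.sqrt_nonneg _) h1 2
    have e1 : euclNorm (A *ᵥ fun i => B i j) ^ 2 = ∑ i, ((A * B) i j) ^ 2 := by
      rw [euclNorm, Real.sq_sqrt (Finset.sum_nonneg fun _ _ => sq_nonneg _)]
      simp [Matrix.mul_apply, Matrix.mulVec, dotProduct]
    have e2 : euclNorm (fun i => B i j) ^ 2 = ∑ i, (B i j) ^ 2 := by
      rw [euclNorm, Real.sq_sqrt (Finset.sum_nonneg fun _ _ => sq_nonneg _)]
    calc ∑ i, ((A * B) i j) ^ 2 = euclNorm (A *ᵥ fun i => B i j) ^ 2 := e1.symm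
      _ ≤ (specNorm A * euclNorm (fun i => B i j)) ^ 2 := h2
      _ = specNorm A ^ 2 * ∑ i, (B i j) ^ 2 := by rw [mul_pow, e2]
  calc frobNorm (A * B) = Real.sqrt (frobNorm (A * B) ^ 2) :=
        (Real.sqrt_sq (frobNorm_nonneg _)).symm
    _ ≤ Real.sqrt ((specNorm A * frobNorm B) ^ 2) := Real.sqrt_le_sqrt key
    _ = specNorm A * frobNorm B := Real.sqrt_sq h0

lemma frobNorm_transpose (A : Matrix m k ℝ) : frobNorm Aᵀ = frobNorm A := by
  have h : (∑ i, ∑ j, (Aᵀ i j) ^ 2) = ∑ i, ∑ j, (A i j) ^ 2 := Finset.sum_comm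
  rw [frobNorm, frobNorm, h]

lemma specNorm_transpose [DecidableEq m] [DecidableEq k] (A : Matrix m k ℝ) :
    specNorm Aᵀ = specNorm A := by
  rw [specNorm_eq_norm, specNorm_eq_norm, ← Matrix.l2_opNorm_conjTranspose]
  congr 1

lemma frobNorm_mul_le_right [DecidableEq k] [DecidableEq p] (B : Matrix m k ℝ) (A : Matrix k p ℝ) :
    frobNorm (B * A) ≤ frobNorm B * specNorm A := by
  calc frobNorm (B * A) = frobNorm (B * A)ᵀ := (frobNorm_transpose _).symm
    _ = frobNorm (Aᵀ * Bᵀ) := by rw [Matrix.transpose_mul]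
    _ ≤ specNorm Aᵀ * frobNorm Bᵀ := frobNorm_mul_le_left _ _
    _ = frobNorm B * specNorm A := by rw [specNorm_transpose, frobNorm_transpose, mul_comm]

lemma frobNorm_relu_sub_le (A B : Matrix m k ℝ) :
    frobNorm (relu A - relu B) ≤ frobNorm (A - B) := by
  rw [frobNorm, frobNorm]
  apply Real.sqrt_le_sqrt
  refine Finset.sum_le_sum fun i _ => Finset.sum_le_sum fun j _ => ?_
  have h : |max (A i j) 0 - max (B i j) 0| ≤ |A i j - B i j| := abs_max_sub_max_le_abs _ _ _
  calc ((relu A - relu B) i j) ^ 2 = |max (A i j) 0 - max (B i j) 0| ^ 2 := by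
        rw [sq_abs]; rfl
    _ ≤ |A i j - B i j| ^ 2 := pow_le_pow_left₀ (abs_nonneg _) h 2
    _ = ((A - B) i j) ^ 2 := by rw [sq_abs]; rfl

lemma frobNorm_relu_le (A : Matrix m k ℝ) : frobNorm (relu A) ≤ frobNorm A := by
  have h := frobNorm_relu_sub_le A (0 : Matrix m k ℝ)
  have h0 : relu (0 : Matrix m k ℝ) = 0 := by ext i j; simp [relu]
  simpa [h0] using h

lemma specNorm_add_le [DecidableEq k] (A B : Matrix m k ℝ) :
    specNorm (A + B) ≤ specNorm A + specNorm B := by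
  rw [specNorm_eq_norm, specNorm_eq_norm, specNorm_eq_norm]; exact norm_add_le A B

lemma gcnRep_frobNorm_le {n : ℕ} (d : ℕ → ℕ) (W : ∀ k : ℕ, Matrix (Fin (d k)) (Fin (d (k + 1))) ℝ)
    (P : Matrix (Fin n) (Fin n) ℝ) (X : Matrix (Fin n) (Fin (d 0)) ℝ) (k : ℕ) :
    frobNorm (gcnRep d W P X k) ≤
      frobNorm X * specNorm P ^ k * ∏ i ∈ Finset.range k, specNorm (W i) := by
  induction k with
  | zero => simp [gcnRep]
  | succ k ih =>
    have h1 : frobNorm (gcnRep d W P X (k + 1)) ≤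
        specNorm P * frobNorm (gcnRep d W P X k) * specNorm (W k) := by
      calc frobNorm (gcnRep d W P X (k + 1)) ≤ frobNorm (P * gcnRep d W P X k * W k) :=
            frobNorm_relu_le _
        _ ≤ frobNorm (P * gcnRep d W P X k) * specNorm (W k) := frobNorm_mul_le_right _ _
        _ ≤ specNorm P * frobNorm (gcnRep d W P X k) * specNorm (W k) := by
            have := frobNorm_mul_le_left P (gcnRep d W P X k)
            exact mul_le_mul_of_nonneg_right this (specNorm_nonneg _)
    calc frobNorm (gcnRep d W P X (k + 1)) ≤
          specNorm P * frobNorm (gcnRep d W P X k) * specNorm (W k) := h1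
      _ ≤ specNorm P * (frobNorm X * specNorm P ^ k * ∏ i ∈ Finset.range k, specNorm (W i)) *
          specNorm (W k) := by
          refine mul_le_mul_of_nonneg_right (mul_le_mul_of_nonneg_left ih (specNorm_nonneg _))
            (specNorm_nonneg _)
      _ = frobNorm X * specNorm P ^ (k + 1) * ∏ i ∈ Finset.range (k + 1), specNorm (W i) := by
          rw [Finset.prod_range_succ, pow_succ]; ring

lemma frobNorm_mul_mul_le {q : Type*} [Fintype q] [DecidableEq k] [DecidableEq p] [DecidableEq q]
    (A : Matrix m k ℝ) (B : Matrix k p ℝ) (C : Matrix p q ℝ) :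
    frobNorm (A * B * C) ≤ specNorm A * frobNorm B * specNorm C :=
  calc frobNorm (A * B * C) ≤ frobNorm (A * B) * specNorm C := frobNorm_mul_le_right _ _
    _ ≤ specNorm A * frobNorm B * specNorm C :=
        mul_le_mul_of_nonneg_right (frobNorm_mul_le_left _ _) (specNorm_nonneg _)

end AuxLemmas

/-- Bound on the change of the node representations of an `l`-layer GCN (with an arbitrary
matrix `P` in place of the graph Laplacian) under a perturbation `ΔW` of the weights with
`‖ΔW_i‖₂ ≤ ‖W_i‖₂/l`: for `1 ≤ j ≤ l-1`,
`‖H_j' - H_j‖_F ≤ ‖X‖_F ‖P‖₂^j (∏_{i=1}^j ‖W_i‖₂) Σ_{k=1}^j (‖ΔW_k‖₂/‖W_k‖₂)(1+1/l)^{j-k}`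
(weights are indexed from `0`, so `W k` is the paper's `W_{k+1}`). -/
theorem gcnRep_pert_frobNorm_le (n l : ℕ) (hl : 2 ≤ l) (d : ℕ → ℕ)
    (W ΔW : ∀ k : ℕ, Matrix (Fin (d k)) (Fin (d (k + 1))) ℝ)
    (hW : ∀ k, k < l → W k ≠ 0)
    (hΔ : ∀ k, k < l → specNorm (ΔW k) ≤ specNorm (W k) / l)
    (P : Matrix (Fin n) (Fin n) ℝ) (X : Matrix (Fin n) (Fin (d 0)) ℝ)
    (j : ℕ) (hj1 : 1 ≤ j) (hjl : j ≤ l - 1) :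
    frobNorm (gcnRep d (fun k => W k + ΔW k) P X j - gcnRep d W P X j) ≤
      frobNorm X * specNorm P ^ j * (∏ i ∈ Finset.range j, specNorm (W i)) *
        ∑ k ∈ Finset.range j,
          specNorm (ΔW k) / specNorm (W k) * (1 + 1 / (l : ℝ)) ^ (j - 1 - k) := by
  have hlR : (0 : ℝ) < l := by exact_mod_cast (by omega : 0 < l)
  revert hjl
  induction j, hj1 using Nat.le_induction with
  | base =>
    intro hjl
    have h0l : 0 < l := by omega
    have hw0 : 0 < specNorm (W 0) := specNorm_pos _ (hW 0 h0l)
    have hE : gcnRep d (fun k => W k + ΔW k) P X 1 - gcnRep d W P X 1 =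
        relu (P * X * (W 0 + ΔW 0)) - relu (P * X * W 0) := rfl
    simp only [pow_one, Finset.prod_range_one, Finset.sum_range_one, Nat.sub_self,
      Nat.zero_sub, pow_zero, mul_one]
    calc frobNorm (gcnRep d (fun k => W k + ΔW k) P X 1 - gcnRep d W P X 1)
        ≤ frobNorm (P * X * (W 0 + ΔW 0) - P * X * W 0) := by
          rw [hE]; exact frobNorm_relu_sub_le _ _
      _ = frobNorm (P * X * ΔW 0) := by rw [Matrix.mul_add, add_sub_cancel_left]
      _ ≤ specNorm P * frobNorm X * specNorm (ΔW 0) := frobNorm_mul_mul_le _ _ _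
      _ = frobNorm X * specNorm P * specNorm (W 0) * (specNorm (ΔW 0) / specNorm (W 0)) := by
          field_simp
  | succ j hj ih =>
    intro hjl
    have hjl' : j ≤ l - 1 := le_trans (Nat.le_succ j) hjl
    have hjlt : j < l := by omega
    have hEj := ih hjl'
    have hwj : 0 < specNorm (W j) := specNorm_pos _ (hW j hjlt)
    have hdj : specNorm (ΔW j) ≤ specNorm (W j) / l := hΔ j hjlt
    have hHj : frobNorm (gcnRep d W P X j) ≤
        frobNorm X * specNorm P ^ j * ∏ i ∈ Finset.range j, specNorm (W i) :=
      gcnRep_frobNorm_le d W P X j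
    set q : ℝ := 1 + 1 / (l : ℝ) with hq
    have hq1 : (0 : ℝ) ≤ q := by positivity
    set Hj' := gcnRep d (fun k => W k + ΔW k) P X j with hHj'def
    set Hj := gcnRep d W P X j with hHjdef
    have hE : gcnRep d (fun k => W k + ΔW k) P X (j + 1) - gcnRep d W P X (j + 1) =
        relu (P * Hj' * (W j + ΔW j)) - relu (P * Hj * W j) := rfl
    have hsplit : P * Hj' * (W j + ΔW j) - P * Hj * W j =
        P * (Hj' - Hj) * (W j + ΔW j) + P * Hj * ΔW j := by
      rw [Matrix.mul_sub, Matrix.sub_mul, Matrix.mul_add, Matrix.mul_add]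
      abel
    have hWsum : specNorm (W j + ΔW j) ≤ specNorm (W j) * q := by
      have h1 : specNorm (W j) * q = specNorm (W j) + specNorm (W j) / l := by
        rw [hq]; field_simp
      have h2 := specNorm_add_le (W j) (ΔW j)
      rw [h1]
      have h3 : specNorm (W j) + specNorm (ΔW j) ≤ specNorm (W j) + specNorm (W j) / l :=
        add_le_add_right hdj _
      exact le_trans h2 h3
    have hsum : (∑ k ∈ Finset.range (j + 1),
          specNorm (ΔW k) / specNorm (W k) * q ^ (j - k)) =
        q * (∑ k ∈ Finset.range j, specNorm (ΔW k) / specNorm (W k) * q ^ (j - 1 - k)) +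
          specNorm (ΔW j) / specNorm (W j) := by
      rw [Finset.sum_range_succ, Nat.sub_self, pow_zero, mul_one, Finset.mul_sum]
      congr 1
      refine Finset.sum_congr rfl fun k hk => ?_
      have hkj : k < j := Finset.mem_range.mp hk
      have he : j - k = (j - 1 - k) + 1 := by omega
      rw [he, pow_succ]
      ring
    have key : frobNorm (gcnRep d (fun k => W k + ΔW k) P X (j + 1) - gcnRep d W P X (j + 1)) ≤
        specNorm P * frobNorm (Hj' - Hj) * (specNorm (W j) * q) +
          specNorm P * frobNorm Hj * specNorm (ΔW j) := by
      calc frobNorm (gcnRep d (fun k => W k + ΔW k) P X (j + 1) - gcnRep d W P X (j + 1))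
          ≤ frobNorm (P * Hj' * (W j + ΔW j) - P * Hj * W j) := by
            rw [hE]; exact frobNorm_relu_sub_le _ _
        _ = frobNorm (P * (Hj' - Hj) * (W j + ΔW j) + P * Hj * ΔW j) := by rw [hsplit]
        _ ≤ frobNorm (P * (Hj' - Hj) * (W j + ΔW j)) + frobNorm (P * Hj * ΔW j) :=
            frobNorm_add_le _ _
        _ ≤ specNorm P * frobNorm (Hj' - Hj) * specNorm (W j + ΔW j) +
              specNorm P * frobNorm Hj * specNorm (ΔW j) :=
            add_le_add (frobNorm_mul_mul_le _ _ _) (frobNorm_mul_mul_le _ _ _)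
        _ ≤ specNorm P * frobNorm (Hj' - Hj) * (specNorm (W j) * q) +
              specNorm P * frobNorm Hj * specNorm (ΔW j) :=
            add_le_add_left (mul_le_mul_of_nonneg_left hWsum
              (mul_nonneg (specNorm_nonneg _) (frobNorm_nonneg _))) _
    have key2 : frobNorm (gcnRep d (fun k => W k + ΔW k) P X (j + 1) - gcnRep d W P X (j + 1)) ≤
        specNorm P * (frobNorm X * specNorm P ^ j * (∏ i ∈ Finset.range j, specNorm (W i)) *
            ∑ k ∈ Finset.range j, specNorm (ΔW k) / specNorm (W k) * q ^ (j - 1 - k)) *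
            (specNorm (W j) * q) +
          specNorm P * (frobNorm X * specNorm P ^ j * ∏ i ∈ Finset.range j, specNorm (W i)) *
            specNorm (ΔW j) := by
      refine le_trans key (add_le_add ?_ ?_)
      · exact mul_le_mul_of_nonneg_right (mul_le_mul_of_nonneg_left hEj (specNorm_nonneg _))
          (mul_nonneg hwj.le hq1)
      · exact mul_le_mul_of_nonneg_right (mul_le_mul_of_nonneg_left hHj (specNorm_nonneg _))
          (specNorm_nonneg _)
    refine le_trans key2 (le_of_eq ?_)
    simp only [Nat.add_sub_cancel]
    rw [hsum, Finset.prod_range_succ, pow_succ]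
    field_simp

end
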